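/- Let h be an m×n ROCN matrix (m ≤ n), let A_1,…,A_m be Hermitian d×d complex matrices satisfying A_i A_k + A_k A_i = 2δ_{ik}·I, and set B_j = Σ_{i=1}^m h_{ij} A_i^T for j = 1,…,n. Let |Φ_d⟩ = (1/√d) Σ_{k=1}^d |k⟩⊗|k⟩ ∈ ℂ^d ⊗ ℂ^d be the maximally entangled state. Then for every j, (Σ_{i=1}^m h_{ij} A_i ⊗ B_j)|Φ_d⟩ = |Φ_d⟩, and consequently ⟨Φ_d| Σ_{i=1}^m Σ_{j=1}^n h_{ij} (A_i ⊗ B_j) |Φ_d⟩ = n. (Attainability part of Proposition 1: the maximal quantum value β_Q^h = n of the ROCN Bell functional is achieved by the reference strategy.) -/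
import Mathlib


open Matrix Kronecker Finset

/-- An `m × n` real matrix `h` (with `m ≤ n`) is ROCN (row-orthogonal, column-normalized)
if all its rows are nonzero, its rows are pairwise orthogonal, and every column has
unit Euclidean norm. -/
def IsROCN {m n : ℕ} (h : Matrix (Fin m) (Fin n) ℝ) : Prop :=
  m ≤ n ∧
  (∀ i, ∃ j, h i j ≠ 0) ∧
  (∀ i k, i ≠ k → ∑ j, h i j * h k j = 0) ∧
  (∀ j, ∑ i, (h i j) ^ 2 = 1)

/-- The maximally entangled state `|Φ_d⟩ = (1/√d) Σₖ |k⟩ ⊗ |k⟩` on `ℂ^d ⊗ ℂ^d`. -/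
noncomputable def maxEnt (d : ℕ) : Fin d × Fin d → ℂ :=
  fun p => if p.1 = p.2 then ((1 / Real.sqrt d : ℝ) : ℂ) else 0

/-- A square matrix with `C * C = 1` fixes the maximally entangled vector via `C ⊗ Cᵀ`. -/
lemma kron_fix_maxEnt {d : ℕ} (C : Matrix (Fin d) (Fin d) ℂ) (hCC : C * C = 1) :
    (C ⊗ₖ Cᵀ).mulVec (maxEnt d) = maxEnt d := by
  funext p
  obtain ⟨a, b⟩ := p
  have h1 := congrFun (congrFun hCC a) b
  simp only [Matrix.mul_apply, Matrix.one_apply] at h1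
  simp only [mulVec, dotProduct, maxEnt, Fintype.sum_prod_type, kroneckerMap_apply,
    Matrix.transpose_apply, mul_ite, mul_zero]
  simp only [Finset.sum_ite_eq, Finset.mem_univ, if_true]
  rw [← Finset.sum_mul, h1]
  split_ifs <;> simp

/-- Kronecker product distributes over a scalar-weighted sum in the left factor. -/
lemma sum_smul_kron {m d : ℕ} (c : Fin m → ℂ) (M : Fin m → Matrix (Fin d) (Fin d) ℂ)
    (N : Matrix (Fin d) (Fin d) ℂ) :
    (∑ i, c i • M i) ⊗ₖ N = ∑ i, c i • (M i ⊗ₖ N) := by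
  ext ⟨a, b⟩ ⟨k, l⟩
  simp [Matrix.sum_apply, Finset.sum_mul, kroneckerMap_apply, mul_assoc]

/-- The weighted sums of anticommuting involutions along a normalized column square to 1. -/
lemma col_comb_sq {m n d : ℕ} (h : Matrix (Fin m) (Fin n) ℝ)
    (hcol : ∀ j, ∑ i, (h i j) ^ 2 = 1)
    (A : Fin m → Matrix (Fin d) (Fin d) ℂ)
    (hCAR : ∀ i k, A i * A k + A k * A i = if i = k then (2 : ℂ) • 1 else 0)
    (j : Fin n) :
    (∑ i, (h i j : ℂ) • A i) * (∑ i, (h i j : ℂ) • A i) = 1 := by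
  set C := ∑ i, (h i j : ℂ) • A i with hC
  have e1 : C * C = ∑ i, ∑ k, ((h i j : ℂ) * h k j) • (A i * A k) := by
    rw [hC, Finset.sum_mul]
    refine Finset.sum_congr rfl fun i _ => ?_
    rw [Finset.mul_sum]
    exact Finset.sum_congr rfl fun k _ => by
      rw [smul_mul_assoc, mul_smul_comm, smul_smul]
  have e2 : C * C = ∑ i, ∑ k, ((h i j : ℂ) * h k j) • (A k * A i) := by
    rw [e1, Finset.sum_comm]
    exact Finset.sum_congr rfl fun i _ => Finset.sum_congr rfl fun k _ => by
      rw [mul_comm ((h i j : ℂ))]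
  have h2 : (2 : ℂ) • (C * C) = (2 : ℂ) • (1 : Matrix (Fin d) (Fin d) ℂ) := by
    have lhs : (2 : ℂ) • (C * C)
        = ∑ i, ∑ k, ((h i j : ℂ) * h k j) • (A i * A k + A k * A i) := by
      rw [two_smul]
      simp only [smul_add, Finset.sum_add_distrib, ← e1, ← e2]
    rw [lhs]
    simp only [hCAR]
    have inner : ∀ i, ∑ k, ((h i j : ℂ) * h k j) •
        (if i = k then ((2 : ℂ) • 1 : Matrix (Fin d) (Fin d) ℂ) else 0)
        = ((h i j : ℂ) * h i j) • ((2 : ℂ) • (1 : Matrix (Fin d) (Fin d) ℂ)) := by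
      intro i
      simp [apply_ite (fun X : Matrix (Fin d) (Fin d) ℂ => ((h i j : ℂ) * h _ j) • X),
        Finset.sum_ite_eq]
    simp only [inner, ← Finset.sum_smul]
    have : ∑ i, ((h i j : ℂ) * h i j) = 1 := by
      have h3 : ∑ i, ((h i j : ℂ) * h i j) = ((∑ i, h i j ^ 2 : ℝ) : ℂ) := by
        push_cast
        simp [sq]
      rw [h3, hcol j, Complex.ofReal_one]
    rw [this, one_smul]
  exact smul_right_injective (Matrix (Fin d) (Fin d) ℂ) two_ne_zero h2

/-- The maximally entangled state is normalized. -/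
lemma maxEnt_norm {d : ℕ} (hd : 0 < d) : star (maxEnt d) ⬝ᵥ maxEnt d = 1 := by
  simp only [dotProduct, maxEnt, Pi.star_apply, Fintype.sum_prod_type]
  have : ∀ a b : Fin d,
      star (if a = b then ((1 / Real.sqrt d : ℝ) : ℂ) else 0) *
        (if a = b then ((1 / Real.sqrt d : ℝ) : ℂ) else 0)
      = if a = b then ((1 / d : ℝ) : ℂ) else 0 := by
    intro a b
    split_ifs
    · rw [Complex.star_def, Complex.conj_ofReal, ← Complex.ofReal_mul,
        div_mul_div_comm, one_mul, Real.mul_self_sqrt (Nat.cast_nonneg d)]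
    · simp
  simp only [this, Finset.sum_ite_eq, Finset.mem_univ, if_true, Finset.sum_const,
    Finset.card_univ, Fintype.card_fin, nsmul_eq_mul]
  push_cast
  rw [mul_one_div]; exact div_self (show (d:ℂ) ≠ 0 by exact_mod_cast hd.ne')

/-- `mulVec` distributes over finite sums of matrices. -/
lemma sum_mulVec' {n d : ℕ} (M : Fin n → Matrix (Fin d × Fin d) (Fin d × Fin d) ℂ)
    (v : Fin d × Fin d → ℂ) :
    (∑ j, M j).mulVec v = ∑ j, (M j).mulVec v := by
  funext p
  simp only [mulVec, dotProduct, Matrix.sum_apply, Finset.sum_mul, Finset.sum_apply]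
  rw [Finset.sum_comm]

/-- (Attainability part of Proposition 1.) For an ROCN matrix `h` and
pairwise anticommuting Hermitian involutions `A i` on `ℂ^d`, set `Bⱼ = Σᵢ hᵢⱼ Aᵢᵀ`. Then
for every `j`, `(Σᵢ hᵢⱼ Aᵢ ⊗ Bⱼ)|Φ_d⟩ = |Φ_d⟩`, and consequently
`⟨Φ_d| Σᵢⱼ hᵢⱼ (Aᵢ ⊗ Bⱼ) |Φ_d⟩ = n`. -/
theorem rocn_bound_attained {m n d : ℕ} (hd : 0 < d)
    (h : Matrix (Fin m) (Fin n) ℝ) (hROCN : IsROCN h)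
    (A : Fin m → Matrix (Fin d) (Fin d) ℂ)
    (hAH : ∀ i, (A i)ᴴ = A i)
    (hCAR : ∀ i k, A i * A k + A k * A i = if i = k then (2 : ℂ) • 1 else 0)
    (B : Fin n → Matrix (Fin d) (Fin d) ℂ)
    (hB : ∀ j, B j = ∑ i, (h i j : ℂ) • (A i)ᵀ) :
    (∀ j, (∑ i, (h i j : ℂ) • (A i ⊗ₖ B j)).mulVec (maxEnt d) = maxEnt d) ∧
    star (maxEnt d) ⬝ᵥ (∑ i, ∑ j, (h i j : ℂ) • (A i ⊗ₖ B j)).mulVec (maxEnt d)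
      = (n : ℂ) := by
  obtain ⟨hmn, hrow, horth, hcol⟩ := hROCN
  have hBC : ∀ j, B j = (∑ i, (h i j : ℂ) • A i)ᵀ := by
    intro j
    rw [hB j, Matrix.transpose_sum]
    exact Finset.sum_congr rfl fun i _ => (Matrix.transpose_smul _ _).symm
  have key : ∀ j, (∑ i, (h i j : ℂ) • (A i ⊗ₖ B j)).mulVec (maxEnt d) = maxEnt d := by
    intro j
    have hEq : (∑ i, (h i j : ℂ) • (A i ⊗ₖ B j))
        = (∑ i, (h i j : ℂ) • A i) ⊗ₖ (∑ i, (h i j : ℂ) • A i)ᵀ := by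
      rw [← hBC j, sum_smul_kron]
    rw [hEq]
    exact kron_fix_maxEnt _ (col_comb_sq h hcol A hCAR j)
  refine ⟨key, ?_⟩
  rw [Finset.sum_comm]
  rw [sum_mulVec']
  have dps : ∀ (w : Fin d × Fin d → ℂ) (f : Fin n → Fin d × Fin d → ℂ),
      w ⬝ᵥ (∑ j, f j) = ∑ j, w ⬝ᵥ f j := by
    intro w f
    simp only [dotProduct, Finset.sum_apply, Finset.mul_sum]
    rw [Finset.sum_comm]
  rw [dps]
  simp only [key, maxEnt_norm hd]
  simp
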